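/- In type D_r with r > 3 (Δ = {±e_i ± e_j : i ≠ j} ⊆ ℝ^r), if Π' ⊆ Π is an indecomposable system of simple roots of cardinality r − 2, then |Δ ∩ span(Π')| ≥ (r−1)(r−2), and consequently |Δ \ span(Π')| ≤ (r−1)(r+2). -/

import Mathlib

open Set

noncomputable section

/-- The `i`-th standard basis vector of ℝ^r. -/
def eV (r : ℕ) (i : Fin r) : EuclideanSpace ℝ (Fin r) := EuclideanSpace.single i 1

/-- The root system of type D_r: Δ = {±e_i ± e_j : i ≠ j}. -/
def rootsD (r : ℕ) : Set (EuclideanSpace ℝ (Fin r)) :=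
  {v | ∃ i j, i ≠ j ∧ ∃ s t : ℝ, (s = 1 ∨ s = -1) ∧ (t = 1 ∨ t = -1) ∧
      v = s • eV r i + t • eV r j}

/-- The standard simple system of type D_r:
α_i = e_i − e_{i+1} (1 ≤ i ≤ r−1) and α_r = e_{r−1} + e_r. -/
def simpleD (r : ℕ) : Set (EuclideanSpace ℝ (Fin r)) :=
  {v | (∃ i j : Fin r, (j : ℕ) = (i : ℕ) + 1 ∧ v = eV r i - eV r j) ∨
    (∃ i j : Fin r, (i : ℕ) = r - 2 ∧ (j : ℕ) = r - 1 ∧ v = eV r i + eV r j)}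

/-- A set of roots is indecomposable if it admits no splitting into two nonempty
mutually orthogonal parts. -/
def Indecomposable {r : ℕ} (S : Set (EuclideanSpace ℝ (Fin r))) : Prop :=
  ∀ S₁ S₂ : Set (EuclideanSpace ℝ (Fin r)), S₁ ∪ S₂ = S → S₁ ∩ S₂ = ∅ →
    S₁.Nonempty → S₂.Nonempty → ∃ a ∈ S₁, ∃ b ∈ S₂, (inner ℝ a b : ℝ) ≠ 0

lemma inner_eV {r : ℕ} (i j : Fin r) :
    (inner ℝ (eV r i) (eV r j) : ℝ) = if i = j then 1 else 0 := by
  simp [eV, EuclideanSpace.inner_single_left, EuclideanSpace.single_apply]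

def ee (m k : ℕ) : EuclideanSpace ℝ (Fin (m+4)) :=
  if h : k < m+4 then eV (m+4) ⟨k, h⟩ else 0

lemma eV_eq_ee {m : ℕ} (i : Fin (m+4)) : eV (m+4) i = ee m i.1 := by
  simp [ee, i.isLt]

lemma inner_ee (m a b : ℕ) :
    (inner ℝ (ee m a) (ee m b) : ℝ) = if a = b ∧ a < m + 4 then 1 else 0 := by
  unfold ee
  by_cases h1 : a < m + 4 <;> by_cases h2 : b < m + 4
  · rw [dif_pos h1, dif_pos h2, inner_eV]
    simp only [Fin.mk.injEq]
    split_ifs <;> first | rfl | (exfalso; omega)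
  · rw [dif_pos h1, dif_neg h2, inner_zero_right, if_neg]; omega
  · rw [dif_neg h1, dif_pos h2, inner_zero_left, if_neg]; omega
  · rw [dif_neg h1, dif_neg h2, inner_zero_left, if_neg]; omega


lemma ee_eq {m k : ℕ} (h : k < m + 4) : ee m k = eV (m+4) ⟨k, h⟩ := dif_pos h



lemma pair_inj {r : ℕ} {i j k l : Fin r} {s t u v : ℝ}
    (hij : i ≠ j) (hkl : k ≠ l) (hs : s ≠ 0) (ht : t ≠ 0) (hv : v ≠ 0)
    (h : s • eV r i + t • eV r j = u • eV r k + v • eV r l) :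
    (i = k ∧ s = u ∧ j = l ∧ t = v) ∨ (i = l ∧ s = v ∧ j = k ∧ t = u) := by
  have H : ∀ x : Fin r,
      ((if i = x then s else 0) + if j = x then t else 0) =
      ((if k = x then u else 0) + if l = x then v else 0) := by
    intro x
    have h0 := congrArg (fun w : EuclideanSpace ℝ (Fin r) => (inner ℝ w (eV r x) : ℝ)) h
    simp only [inner_add_left, real_inner_smul_left, inner_eV, mul_ite, mul_one,
      mul_zero] at h0
    exact h0
  by_cases hik : i = k
  · subst hik
    have hli : ¬ (l = i) := fun hh => hkl hh.symm
    have h1 := H i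
    rw [if_pos rfl, if_neg (fun hh : j = i => hij hh.symm), if_pos rfl, if_neg hli] at h1
    have hsu : s = u := by linarith
    have h2 := H j
    rw [if_neg hij, if_pos rfl, if_neg hij] at h2
    by_cases hlj : l = j
    · rw [if_pos hlj] at h2
      exact Or.inl ⟨rfl, hsu, hlj.symm, by linarith⟩
    · rw [if_neg hlj] at h2
      exact absurd (by linarith : t = 0) ht
  · have h1 := H i
    rw [if_pos rfl, if_neg (fun hh : j = i => hij hh.symm), if_neg (fun hh : k = i => hik hh.symm)] at h1
    by_cases hli : l = i
    · rw [if_pos hli] at h1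
      have hsv : s = v := by linarith
      have h2 := H j
      have hlj : ¬ (l = j) := by rw [hli]; exact fun hh => hij hh
      rw [if_neg hij, if_pos rfl, if_neg hlj] at h2
      by_cases hkj : k = j
      · rw [if_pos hkj] at h2
        exact Or.inr ⟨hli.symm, hsv, hkj.symm, by linarith⟩
      · rw [if_neg hkj] at h2
        exact absurd (by linarith : t = 0) ht
    · rw [if_neg hli] at h1
      exact absurd (by linarith : s = 0) hs




/-- α_k = e_k − e_{k+1}, sensible for k ≤ m+2. -/
def aa (m k : ℕ) : EuclideanSpace ℝ (Fin (m+4)) := ee m k - ee m (k+1)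

/-- β = e_{m+2} + e_{m+3}. -/
def bb (m : ℕ) : EuclideanSpace ℝ (Fin (m+4)) := ee m (m+2) + ee m (m+3)

lemma inner_aa_aa (m : ℕ) {k l : ℕ} (h : k + 2 ≤ l) (hl : l ≤ m + 2) :
    (inner ℝ (aa m k) (aa m l) : ℝ) = 0 := by
  simp only [aa, inner_sub_left, inner_sub_right, inner_ee]
  split_ifs <;> (try norm_num) <;> omega

lemma inner_aa_bb (m : ℕ) {k : ℕ} (hne : k ≠ m + 1) (hk : k ≤ m + 2) :
    (inner ℝ (aa m k) (bb m) : ℝ) = 0 := by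
  simp only [aa, bb, inner_sub_left, inner_add_right, inner_ee]
  split_ifs <;> (try norm_num) <;> omega

lemma aa_ne_bb (m : ℕ) {k : ℕ} (hk : k ≤ m + 2) : aa m k ≠ bb m := by
  intro h
  have h0 := congrArg (fun w : EuclideanSpace ℝ (Fin (m+4)) =>
    (inner ℝ w (ee m (m+3)) : ℝ)) h
  simp only [aa, bb, inner_sub_left, inner_add_left, inner_ee] at h0
  split_ifs at h0 <;> (try norm_num at h0) <;> (try simp_all) <;> omega

lemma mem_simpleD {m : ℕ} {v : EuclideanSpace ℝ (Fin (m+4))} (hv : v ∈ simpleD (m+4)) :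
    (∃ k ≤ m + 2, v = aa m k) ∨ v = bb m := by
  rcases hv with ⟨i, j, hj, rfl⟩ | ⟨i, j, hi, hj, rfl⟩
  · left
    refine ⟨i.1, by have := j.isLt; omega, ?_⟩
    have e1 : ee m i.1 = eV (m+4) i := by
      rw [ee_eq i.isLt]
    have e2 : ee m (i.1 + 1) = eV (m+4) j := by
      rw [ee_eq (show i.1 + 1 < m + 4 by have := j.isLt; omega)]
      exact congrArg _ (Fin.ext hj.symm)
    rw [aa, e1, e2]
  · right
    have e1 : ee m (m+2) = eV (m+4) i := by
      rw [ee_eq (show m + 2 < m + 4 by omega)]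
      exact congrArg _ (Fin.ext (show m + 2 = i.1 by omega))
    have e2 : ee m (m+3) = eV (m+4) j := by
      rw [ee_eq (show m + 3 < m + 4 by omega)]
      exact congrArg _ (Fin.ext (show m + 3 = j.1 by omega))
    rw [bb, e1, e2]


/-- A "difference family" of signed basis vectors. -/
def fam {r n : ℕ} (ι : Fin (n+1) → Fin r) (ε : Fin (n+1) → ℝ) :
    Fin (n+1) × Fin n → EuclideanSpace ℝ (Fin r) :=
  fun p => ε p.1 • eV r (ι p.1)
    - ε (p.1.succAbove p.2) • eV r (ι (p.1.succAbove p.2))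

lemma fam_eq {r n : ℕ} (ι : Fin (n+1) → Fin r) (ε : Fin (n+1) → ℝ) (p) :
    fam ι ε p = ε p.1 • eV r (ι p.1)
      + (-(ε (p.1.succAbove p.2))) • eV r (ι (p.1.succAbove p.2)) := by
  rw [fam, sub_eq_add_neg, neg_smul]

lemma fam_mem_roots {r n : ℕ} (ι : Fin (n+1) → Fin r) (ε : Fin (n+1) → ℝ)
    (hι : Function.Injective ι) (hε : ∀ a, ε a = 1 ∨ ε a = -1) (p) :
    fam ι ε p ∈ rootsD r := by
  rw [fam_eq]
  refine ⟨ι p.1, ι (p.1.succAbove p.2), hι.ne (Fin.succAbove_ne p.1 p.2).symm,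
    _, _, hε _, ?_, rfl⟩
  rcases hε (p.1.succAbove p.2) with h | h <;> rw [h] <;> norm_num

lemma fam_inj {r n : ℕ} (ι : Fin (n+1) → Fin r) (ε : Fin (n+1) → ℝ)
    (hι : Function.Injective ι) (hε : ∀ a, ε a = 1 ∨ ε a = -1) :
    Function.Injective (fam ι ε) := by
  have hne : ∀ a, ε a ≠ 0 := fun a => by rcases hε a with h | h <;> rw [h] <;> norm_num
  have hnegne : ∀ x, -(ε x) ≠ 0 := fun x => neg_ne_zero.mpr (hne x)
  rintro ⟨a, b⟩ ⟨c, d⟩ h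
  rw [fam_eq, fam_eq] at h
  have hab : ι a ≠ ι (a.succAbove b) := hι.ne (Fin.succAbove_ne a b).symm
  have hcd : ι c ≠ ι (c.succAbove d) := hι.ne (Fin.succAbove_ne c d).symm
  rcases pair_inj hab hcd (hne a) (hnegne _) (hnegne _) h with
    ⟨h1, h2, h3, h4⟩ | ⟨h1, h2, h3, h4⟩
  · have hac : a = c := hι h1
    subst hac
    have hbd : b = d := Fin.succAbove_right_injective (hι h3)
    rw [hbd]
  · exfalso
    have had : a = c.succAbove d := hι h1
    rw [← had] at h2
    rcases hε a with he | he <;> rw [he] at h2 <;> norm_num at h2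

lemma card_le_ncard {α γ : Type*} [Fintype γ] {S : Set α} (f : γ → α)
    (hinj : Function.Injective f) (hmem : ∀ x, f x ∈ S) (hfin : S.Finite) :
    Fintype.card γ ≤ S.ncard := by
  have h1 : (Set.range f).ncard = Fintype.card γ := by
    rw [← Set.image_univ, Set.ncard_image_of_injective _ hinj, Set.ncard_univ,
      Nat.card_eq_fintype_card]
  rw [← h1]
  exact Set.ncard_le_ncard (Set.range_subset_iff.mpr hmem) hfin

lemma rootsD_finite (r : ℕ) : (rootsD r).Finite := by
  have : rootsD r ⊆ Set.range (fun q : (Fin r × Fin r) × Bool × Bool =>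
      (cond q.2.1 (1:ℝ) (-1)) • eV r q.1.1 + (cond q.2.2 (1:ℝ) (-1)) • eV r q.1.2) := by
    rintro v ⟨i, j, hij, s, t, hs, ht, rfl⟩
    rcases hs with rfl | rfl <;> rcases ht with rfl | rfl
    · exact ⟨((i, j), true, true), rfl⟩
    · exact ⟨((i, j), true, false), rfl⟩
    · exact ⟨((i, j), false, true), rfl⟩
    · exact ⟨((i, j), false, false), rfl⟩
  exact Set.Finite.subset (Set.finite_range _) this

lemma rootsD_ncard_le (m : ℕ) : (rootsD (m+4)).ncard ≤ 2*(m+4)*(m+3) := by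
  classical
  set L : Finset (Fin (m+4) × Fin (m+4)) := Finset.univ.filter (fun q => q.1 < q.2) with hL
  set G : Finset (Fin (m+4) × Fin (m+4)) := Finset.univ.filter (fun q => q.2 < q.1) with hG
  have hGL : G = L.image Prod.swap := by
    ext q
    simp only [hL, hG, Finset.mem_filter, Finset.mem_univ, true_and, Finset.mem_image]
    constructor
    · intro hq; exact ⟨(q.2, q.1), hq, rfl⟩
    · rintro ⟨p, hp, rfl⟩; exact hp
  have hcardLG : G.card = L.card := by
    rw [hGL]; exact Finset.card_image_of_injective _ Prod.swap_injective
  have hdisj : Disjoint L G := by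
    rw [Finset.disjoint_left]
    intro q hq hq'
    simp only [hL, hG, Finset.mem_filter] at hq hq'
    exact absurd hq'.2 (not_lt.mpr hq.2.le)
  have hunion : L ∪ G = Finset.univ.offDiag := by
    ext q
    simp only [hL, hG, Finset.mem_union, Finset.mem_filter, Finset.mem_univ, true_and,
      Finset.mem_offDiag]
    constructor
    · rintro (h | h) <;> intro he <;> rw [he] at h <;> exact lt_irrefl _ h
    · intro h
      exact lt_or_gt_of_ne (fun he => h he)
  have h2c : 2 * L.card = (m+4)*(m+4) - (m+4) := by
    have := Finset.card_union_of_disjoint hdisj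
    rw [hunion, Finset.offDiag_card, hcardLG] at this
    simp only [Finset.card_univ, Fintype.card_fin] at this
    omega
  set Gf : ((Fin (m+4) × Fin (m+4)) × Bool × Bool) → EuclideanSpace ℝ (Fin (m+4)) :=
    fun q => (cond q.2.1 (1:ℝ) (-1)) • eV (m+4) q.1.1
      + (cond q.2.2 (1:ℝ) (-1)) • eV (m+4) q.1.2 with hGf
  set D : Finset ((Fin (m+4) × Fin (m+4)) × Bool × Bool) := L ×ˢ Finset.univ with hD
  have hsub : rootsD (m+4) ⊆ ↑(D.image Gf) := by
    rintro v ⟨i, j, hij, s, t, hs, ht, rfl⟩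
    rcases lt_or_gt_of_ne hij with hlt | hgt
    · have hmem : (i, j) ∈ L := by simp [hL, hlt]
      rcases hs with rfl | rfl <;> rcases ht with rfl | rfl <;>
        [ (exact Finset.mem_coe.mpr (Finset.mem_image.mpr ⟨((i,j),true,true),
            by simp [hD, hmem], rfl⟩));
          (exact Finset.mem_coe.mpr (Finset.mem_image.mpr ⟨((i,j),true,false),
            by simp [hD, hmem], rfl⟩));
          (exact Finset.mem_coe.mpr (Finset.mem_image.mpr ⟨((i,j),false,true),
            by simp [hD, hmem], rfl⟩));
          (exact Finset.mem_coe.mpr (Finset.mem_image.mpr ⟨((i,j),false,false),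
            by simp [hD, hmem], rfl⟩))]
    · have hmem : (j, i) ∈ L := by simp [hL, hgt]
      have hcomm : s • eV (m+4) i + t • eV (m+4) j
          = t • eV (m+4) j + s • eV (m+4) i := add_comm _ _
      rw [hcomm]
      rcases ht with rfl | rfl <;> rcases hs with rfl | rfl <;>
        [ (exact Finset.mem_coe.mpr (Finset.mem_image.mpr ⟨((j,i),true,true),
            by simp [hD, hmem], rfl⟩));
          (exact Finset.mem_coe.mpr (Finset.mem_image.mpr ⟨((j,i),true,false),
            by simp [hD, hmem], rfl⟩));
          (exact Finset.mem_coe.mpr (Finset.mem_image.mpr ⟨((j,i),false,true),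
            by simp [hD, hmem], rfl⟩));
          (exact Finset.mem_coe.mpr (Finset.mem_image.mpr ⟨((j,i),false,false),
            by simp [hD, hmem], rfl⟩))]
  have hle1 : (rootsD (m+4)).ncard ≤ (D.image Gf).card := by
    have := Set.ncard_le_ncard hsub (Finset.finite_toSet _)
    rwa [Set.ncard_coe_finset] at this
  have hle2 : (D.image Gf).card ≤ D.card := Finset.card_image_le
  have hDcard : D.card = L.card * 4 := by
    rw [hD, Finset.card_product]
    congr 1
  have hP : (m+4)*(m+4) - (m+4) = (m+4)*(m+3) := by
    simpa using (Nat.mul_sub (m+4) (m+4) 1).symm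
  have hassoc : 2*(m+4)*(m+3) = 2*((m+4)*(m+3)) := by ring
  rw [hassoc]
  obtain ⟨P, hPdef⟩ : ∃ P, (m+4)*(m+3) = P := ⟨_, rfl⟩
  rw [hPdef] at hP ⊢
  omega

lemma tele_mem {m lo hi : ℕ} {P : Set (EuclideanSpace ℝ (Fin (m+4)))}
    (hP : ∀ k, lo ≤ k → k ≤ hi → aa m k ∈ P) :
    ∀ d a, lo ≤ a → a + d ≤ hi + 1 → ee m a - ee m (a + d) ∈ Submodule.span ℝ P := by
  intro d
  induction d with
  | zero => intro a _ _; simpa using Submodule.zero_mem _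
  | succ n ih =>
      intro a ha hd
      have h1 := ih a ha (by omega)
      have h2 : aa m (a + n) ∈ Submodule.span ℝ P :=
        Submodule.subset_span (hP (a+n) (by omega) (by omega))
      have e : a + (n+1) = (a+n)+1 := by omega
      have key : ee m a - ee m (a + (n+1))
          = (ee m a - ee m (a + n)) + aa m (a + n) := by
        rw [e, aa]; abel
      rw [key]
      exact Submodule.add_mem _ h1 h2

lemma diff_mem {m lo hi : ℕ} {P : Set (EuclideanSpace ℝ (Fin (m+4)))}
    (hP : ∀ k, lo ≤ k → k ≤ hi → aa m k ∈ P) {a b : ℕ}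
    (ha : lo ≤ a) (ha' : a ≤ hi + 1) (hb : lo ≤ b) (hb' : b ≤ hi + 1) :
    ee m a - ee m b ∈ Submodule.span ℝ P := by
  rcases le_total a b with h | h
  · have e : a + (b - a) = b := by omega
    have := tele_mem hP (b - a) a ha (by omega)
    rwa [e] at this
  · have e : b + (a - b) = a := by omega
    have h0 := tele_mem hP (a - b) b hb (by omega)
    have h1 := Submodule.neg_mem _ h0
    rwa [neg_sub, e] at h1

lemma ncard_le_card_of_subset {α : Type*} {S : Set α} {F : Finset α} (h : S ⊆ ↑F) :
    S.ncard ≤ F.card := by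
  have := Set.ncard_le_ncard h F.finite_toSet
  rwa [Set.ncard_coe_finset] at this

section Classify

variable {m : ℕ} {Pi' : Set (EuclideanSpace ℝ (Fin (m+4)))}

lemma lower_gap (hsub : Pi' ⊆ simpleD (m+4)) (hcard : Pi'.ncard = m + 2)
    (hind : Indecomposable Pi') {k : ℕ} (hk1 : 1 ≤ k) (hk2 : k ≤ m + 1)
    (hknot : aa m k ∉ Pi') : ∀ l, l < k → aa m l ∉ Pi' := by
  classical
  intro l hl hmem
  set T : Set (EuclideanSpace ℝ (Fin (m+4))) := {v | ∃ l', l' < k ∧ v = aa m l'} with hT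
  have hS1 : (Pi' ∩ T).Nonempty := ⟨aa m l, hmem, l, hl, rfl⟩
  have hS2 : (Pi' \ T).Nonempty := by
    rw [Set.nonempty_iff_ne_empty]
    intro hemp
    have hsubT : Pi' ⊆ ↑((Finset.range k).image (aa m)) := by
      intro v hv
      have hvT : v ∈ T := by
        by_contra hvT
        exact absurd (Set.mem_diff_of_mem hv hvT) (hemp ▸ Set.notMem_empty v)
      obtain ⟨l', hl', rfl⟩ := hvT
      exact Finset.mem_coe.mpr (Finset.mem_image.mpr ⟨l', Finset.mem_range.mpr hl', rfl⟩)
    have := ncard_le_card_of_subset hsubT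
    have h2 := Finset.card_image_le (s := Finset.range k) (f := aa m)
    rw [Finset.card_range] at h2
    omega
  obtain ⟨x, hx, y, hy, hxy⟩ := hind (Pi' ∩ T) (Pi' \ T)
    (Set.inter_union_diff Pi' T)
    (by ext v
        simp only [Set.mem_inter_iff, Set.mem_diff, Set.mem_empty_iff_false, iff_false]
        rintro ⟨⟨_, hvT⟩, _, hnT⟩
        exact hnT hvT) hS1 hS2
  obtain ⟨hxP, l', hl', rfl⟩ := hx
  obtain ⟨hyP, hyT⟩ := hy
  rcases mem_simpleD (hsub hyP) with ⟨l'', hl''le, rfl⟩ | rfl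
  · have h1 : ¬ (l'' < k) := fun hc => hyT ⟨l'', hc, rfl⟩
    have h2 : l'' ≠ k := fun hc => hknot (hc ▸ hyP)
    exact hxy (inner_aa_aa m (by omega) hl''le)
  · exact hxy (inner_aa_bb m (by omega) (by omega))

lemma classify (hsub : Pi' ⊆ simpleD (m+4)) (hcard : Pi'.ncard = m + 2)
    (hind : Indecomposable Pi') :
    (∀ k, k ≤ m + 1 → aa m k ∈ Pi') ∨
    (∀ k, 1 ≤ k → k ≤ m + 2 → aa m k ∈ Pi') ∨
    ((∀ k, 1 ≤ k → k ≤ m + 1 → aa m k ∈ Pi') ∧ bb m ∈ Pi') ∨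
    ((∀ k, 2 ≤ k → k ≤ m + 2 → aa m k ∈ Pi') ∧ bb m ∈ Pi' ∧ 1 ≤ m) := by
  classical
  by_cases hall : ∀ k, 1 ≤ k → k ≤ m + 1 → aa m k ∈ Pi'
  · by_cases h0 : aa m 0 ∈ Pi'
    · left
      intro k hk
      rcases Nat.eq_zero_or_pos k with rfl | hpos
      · exact h0
      · exact hall k hpos hk
    · by_cases hm2 : aa m (m+2) ∈ Pi'
      · right; left
        intro k h1 h2
        rcases Nat.lt_or_ge k (m+2) with h | h
        · exact hall k h1 (by omega)
        · have : k = m + 2 := by omega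
          exact this ▸ hm2
      · by_cases hbbm : bb m ∈ Pi'
        · right; right; left
          exact ⟨fun k h1 h2 => hall k h1 h2, hbbm⟩
        · exfalso
          have hsub2 : Pi' ⊆ ↑((Finset.Icc 1 (m+1)).image (aa m)) := by
            intro v hv
            rcases mem_simpleD (hsub hv) with ⟨l, hlle, rfl⟩ | rfl
            · have hl0 : l ≠ 0 := fun hc => h0 (hc ▸ hv)
              have hlm2 : l ≠ m + 2 := fun hc => hm2 (hc ▸ hv)
              exact Finset.mem_coe.mpr (Finset.mem_image.mpr
                ⟨l, Finset.mem_Icc.mpr (show 1 ≤ l ∧ l ≤ m + 1 by omega), rfl⟩)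
            · exact absurd hv hbbm
          have := ncard_le_card_of_subset hsub2
          have h2 := Finset.card_image_le (s := Finset.Icc 1 (m+1)) (f := aa m)
          rw [Nat.card_Icc] at h2
          omega
  · push_neg at hall
    obtain ⟨k, hk1, hk2, hknot⟩ := hall
    have hgap := lower_gap hsub hcard hind hk1 hk2 hknot
    have hsub2 : Pi' ⊆ ↑(((Finset.Icc (k+1) (m+2)).image (aa m)) ∪ {bb m}) := by
      intro v hv
      rcases mem_simpleD (hsub hv) with ⟨l, hlle, rfl⟩ | rfl
      · have h1 : ¬ (l < k) := fun hc => (hgap l hc) hv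
        have h2 : l ≠ k := fun hc => hknot (hc ▸ hv)
        refine Finset.mem_coe.mpr (Finset.mem_union_left _ (Finset.mem_image.mpr
          ⟨l, Finset.mem_Icc.mpr (show k + 1 ≤ l ∧ l ≤ m + 2 by omega), rfl⟩))
      · exact Finset.mem_coe.mpr (Finset.mem_union_right _ (Finset.mem_singleton_self _))
    have hcard2 := ncard_le_card_of_subset hsub2
    have hcard3 := Finset.card_union_le ((Finset.Icc (k+1) (m+2)).image (aa m)) {bb m}
    have hcard4 := Finset.card_image_le (s := Finset.Icc (k+1) (m+2)) (f := aa m)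
    rw [Nat.card_Icc] at hcard4
    have hcard5 : (({bb m} : Finset (EuclideanSpace ℝ (Fin (m+4))))).card = 1 :=
      Finset.card_singleton _
    have hk : k = 1 := by omega
    subst hk
    -- now Pi' must equal the full set
    have hUcard : (((Finset.Icc 2 (m+2)).image (aa m)) ∪ {bb m}).card ≤ m + 2 := by
      have := Finset.card_union_le ((Finset.Icc 2 (m+2)).image (aa m)) ({bb m} : Finset _)
      have h4 := Finset.card_image_le (s := Finset.Icc 2 (m+2)) (f := aa m)
      rw [Nat.card_Icc] at h4
      omega
    have hPe : Pi' = ↑(((Finset.Icc 2 (m+2)).image (aa m)) ∪ {bb m}) := by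
      apply Set.eq_of_subset_of_ncard_le hsub2
      rw [Set.ncard_coe_finset]; omega
    have hbbmem : bb m ∈ Pi' := by
      rw [hPe]
      exact Finset.mem_coe.mpr (Finset.mem_union_right _ (Finset.mem_singleton_self _))
    have haamem : ∀ j, 2 ≤ j → j ≤ m + 2 → aa m j ∈ Pi' := by
      intro j hj1 hj2
      rw [hPe]
      exact Finset.mem_coe.mpr (Finset.mem_union_left _
        (Finset.mem_image.mpr ⟨j, Finset.mem_Icc.mpr ⟨hj1, hj2⟩, rfl⟩))
    right; right; right
    refine ⟨haamem, hbbmem, ?_⟩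
    by_contra hm
    have hm0 : m = 0 := by omega
    subst hm0
    obtain ⟨x, hx, y, hy, hxy⟩ := hind {aa 0 2} {bb 0}
      (by rw [hPe]
          ext v
          simp only [Set.mem_union, Set.mem_singleton_iff, Finset.coe_union,
            Finset.coe_image, Finset.coe_singleton, Set.mem_image, Finset.mem_coe,
            Finset.mem_Icc]
          constructor
          · rintro (rfl | rfl)
            · exact Or.inl ⟨2, by omega, rfl⟩
            · exact Or.inr rfl
          · rintro (⟨l, hl, rfl⟩ | rfl)
            · have : l = 2 := by omega
              subst this; exact Or.inl rfl
            · exact Or.inr rfl)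
      (by ext v
          simp only [Set.mem_inter_iff, Set.mem_singleton_iff, Set.mem_empty_iff_false,
            iff_false, not_and]
          rintro rfl
          exact aa_ne_bb 0 (by omega))
      ⟨_, rfl⟩ ⟨_, rfl⟩
    rw [Set.mem_singleton_iff] at hx hy
    subst hx; subst hy
    exact hxy (inner_aa_bb 0 (by omega) (by omega))

end Classify

section Cases

variable {m : ℕ} {Pi' : Set (EuclideanSpace ℝ (Fin (m+4)))}

lemma interFinite (m : ℕ) (Pi' : Set (EuclideanSpace ℝ (Fin (m+4)))) :
    (rootsD (m+4) ∩ ↑(Submodule.span ℝ Pi')).Finite :=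
  (rootsD_finite _).inter_of_left _

lemma case1 (h : ∀ k, k ≤ m + 1 → aa m k ∈ Pi') :
    (m+3)*(m+2) ≤ (rootsD (m+4) ∩ ↑(Submodule.span ℝ Pi')).ncard := by
  have hbound := card_le_ncard
    (fam (fun a : Fin (m+3) => a.castSucc) (fun _ => (1:ℝ)))
    (fam_inj _ _ (Fin.castSucc_injective _) (fun _ => Or.inl rfl))
    (fun p => ?_) (interFinite m Pi')
  · simpa [Fintype.card_prod] using hbound
  refine ⟨fam_mem_roots _ _ (Fin.castSucc_injective _) (fun _ => Or.inl rfl) p, ?_⟩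
  rw [fam]
  simp only [one_smul]
  rw [eV_eq_ee, eV_eq_ee]
  exact diff_mem (lo := 0) (hi := m+1) (fun k _ h2 => h k h2)
    (Nat.zero_le _) (by rw [Fin.coe_castSucc]; omega)
    (Nat.zero_le _) (by rw [Fin.coe_castSucc]; omega)

lemma case2 (h : ∀ k, 1 ≤ k → k ≤ m + 2 → aa m k ∈ Pi') :
    (m+3)*(m+2) ≤ (rootsD (m+4) ∩ ↑(Submodule.span ℝ Pi')).ncard := by
  have hbound := card_le_ncard
    (fam (fun a : Fin (m+3) => a.succ) (fun _ => (1:ℝ)))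
    (fam_inj _ _ (Fin.succ_injective _) (fun _ => Or.inl rfl))
    (fun p => ?_) (interFinite m Pi')
  · simpa [Fintype.card_prod] using hbound
  refine ⟨fam_mem_roots _ _ (Fin.succ_injective _) (fun _ => Or.inl rfl) p, ?_⟩
  rw [fam]
  simp only [one_smul]
  rw [eV_eq_ee, eV_eq_ee]
  exact diff_mem (lo := 1) (hi := m+2) (fun k h1 h2 => h k h1 h2)
    (by simp [Fin.val_succ]) (by have := (p.1.succ).isLt; omega)
    (by simp [Fin.val_succ]) (by have := ((p.1.succAbove p.2).succ).isLt; omega)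

lemma sum_mem3 (h1 : ∀ k, 1 ≤ k → k ≤ m + 1 → aa m k ∈ Pi') (h2 : bb m ∈ Pi')
    {a : ℕ} (ha1 : 1 ≤ a) (ha2 : a ≤ m + 2) :
    ee m a + ee m (m+3) ∈ Submodule.span ℝ Pi' := by
  have hd : ee m a - ee m (m+2) ∈ Submodule.span ℝ Pi' :=
    diff_mem (lo := 1) (hi := m+1) h1 ha1 (by omega) (by omega) (by omega)
  have hb : bb m ∈ Submodule.span ℝ Pi' := Submodule.subset_span h2
  have key : ee m a + ee m (m+3) = (ee m a - ee m (m+2)) + bb m := by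
    rw [bb]; abel
  rw [key]
  exact Submodule.add_mem _ hd hb

lemma case3 (h1 : ∀ k, 1 ≤ k → k ≤ m + 1 → aa m k ∈ Pi') (h2 : bb m ∈ Pi') :
    (m+3)*(m+2) ≤ (rootsD (m+4) ∩ ↑(Submodule.span ℝ Pi')).ncard := by
  classical
  set ι : Fin (m+3) → Fin (m+4) := fun a =>
    if a.1 < m + 2 then (⟨a.1 + 1, by omega⟩ : Fin (m+4)) else ⟨m+3, by omega⟩ with hι
  set ε : Fin (m+3) → ℝ := fun a => if a.1 < m + 2 then 1 else -1 with hε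
  have hιinj : Function.Injective ι := by
    intro x y hxy
    simp only [hι] at hxy
    by_cases hx : x.1 < m + 2 <;> by_cases hy : y.1 < m + 2
    · rw [if_pos hx, if_pos hy] at hxy
      exact Fin.ext (by have := congrArg Fin.val hxy; simpa using this)
    · rw [if_pos hx, if_neg hy] at hxy
      have := congrArg Fin.val hxy; simp at this; omega
    · rw [if_neg hx, if_pos hy] at hxy
      have := congrArg Fin.val hxy; simp at this; omega
    · exact Fin.ext (by omega)
  have hεpm : ∀ a, ε a = 1 ∨ ε a = -1 := by
    intro a; simp only [hε]; split_ifs <;> simp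
  have hspan : ∀ x y : Fin (m+3), x ≠ y →
      ε x • eV (m+4) (ι x) - ε y • eV (m+4) (ι y) ∈ Submodule.span ℝ Pi' := by
    intro x y hxy
    by_cases hx : x.1 < m + 2 <;> by_cases hy : y.1 < m + 2 <;>
      simp only [hι, hε, if_pos, if_neg, hx, hy, ite_true, ite_false, if_true, if_false,
        one_smul, neg_smul, neg_neg, sub_neg_eq_add]
    · rw [eV_eq_ee, eV_eq_ee]
      exact diff_mem (lo := 1) (hi := m+1) h1 (by simp) (by simp; omega)
        (by simp) (by simp; omega)
    · rw [eV_eq_ee, eV_eq_ee]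
      simp only [Fin.val_mk]
      exact sum_mem3 h1 h2 (by omega) (by omega)
    · rw [eV_eq_ee, eV_eq_ee]
      simp only [Fin.val_mk]
      have := sum_mem3 h1 h2 (a := y.1 + 1) (by omega) (by omega)
      have h3 := Submodule.neg_mem _ this
      have key : -(ee m (y.1+1) + ee m (m+3)) = -ee m (m+3) - ee m (y.1+1) := by
        abel
      rw [← key]
      exact h3
    · exact absurd (Fin.ext (by omega) : x = y) hxy
  have hbound := card_le_ncard (fam ι ε) (fam_inj _ _ hιinj hεpm)
    (fun p => ?_) (interFinite m Pi')
  · simpa [Fintype.card_prod] using hbound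
  refine ⟨fam_mem_roots _ _ hιinj hεpm p, ?_⟩
  rw [fam]
  exact hspan p.1 (p.1.succAbove p.2) (Fin.succAbove_ne p.1 p.2).symm

end Cases

section Case4

variable {m : ℕ} {Pi' : Set (EuclideanSpace ℝ (Fin (m+4)))}

lemma single_mem4 (h1 : ∀ k, 2 ≤ k → k ≤ m + 2 → aa m k ∈ Pi') (h2 : bb m ∈ Pi') :
    ∀ a, 2 ≤ a → a ≤ m + 3 → ee m a ∈ Submodule.span ℝ Pi' := by
  have hm2 : ee m (m+2) ∈ Submodule.span ℝ Pi' := by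
    have key : ee m (m+2) = (2⁻¹ : ℝ) • (aa m (m+2) + bb m) := by
      rw [aa, bb]
      match_scalars <;> norm_num
    rw [key]
    exact Submodule.smul_mem _ _ (Submodule.add_mem _
      (Submodule.subset_span (h1 (m+2) (by omega) (by omega)))
      (Submodule.subset_span h2))
  have hm3 : ee m (m+3) ∈ Submodule.span ℝ Pi' := by
    have key : ee m (m+3) = bb m - ee m (m+2) := by rw [bb]; abel
    rw [key]
    exact Submodule.sub_mem _ (Submodule.subset_span h2) hm2
  have hdesc : ∀ d, d ≤ m → ee m (m + 2 - d) ∈ Submodule.span ℝ Pi' := by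
    intro d
    induction d with
    | zero => intro _; simpa using hm2
    | succ n ih =>
        intro hn
        have e : (m + 2 - (n+1)) + 1 = m + 2 - n := by omega
        have key : ee m (m + 2 - (n+1))
            = aa m (m + 2 - (n+1)) + ee m (m + 2 - n) := by
          rw [aa, e]; abel
        rw [key]
        exact Submodule.add_mem _
          (Submodule.subset_span (h1 _ (by omega) (by omega))) (ih (by omega))
  intro a ha1 ha2
  rcases Nat.lt_or_ge a (m+3) with h | h
  · have e : m + 2 - (m + 2 - a) = a := by omega
    exact e ▸ hdesc (m + 2 - a) (by omega)
  · have e : a = m + 3 := by omega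
    exact e ▸ hm3

def ι4 (m : ℕ) : Fin (m+2) → Fin (m+4) := fun a => ⟨a.1 + 2, by omega⟩

lemma ι4_inj (m : ℕ) : Function.Injective (ι4 m) := by
  intro x y h
  have := congrArg Fin.val h
  simp only [ι4, Fin.val_mk] at this
  exact Fin.ext (by omega)

def g1 (m : ℕ) (a c : Fin (m+2)) : EuclideanSpace ℝ (Fin (m+4)) :=
  eV (m+4) (ι4 m a) - eV (m+4) (ι4 m c)

def g2 (m : ℕ) (a c : Fin (m+2)) : EuclideanSpace ℝ (Fin (m+4)) :=
  if a < c then eV (m+4) (ι4 m a) + eV (m+4) (ι4 m c)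
  else -eV (m+4) (ι4 m a) - eV (m+4) (ι4 m c)

def f4 (m : ℕ) : (Fin (m+2) × Fin (m+1)) × Bool → EuclideanSpace ℝ (Fin (m+4)) :=
  fun q => if q.2 then g1 m q.1.1 (q.1.1.succAbove q.1.2)
    else g2 m q.1.1 (q.1.1.succAbove q.1.2)

lemma g1_eq (m : ℕ) (a c : Fin (m+2)) :
    g1 m a c = (1:ℝ) • eV (m+4) (ι4 m a) + (-1:ℝ) • eV (m+4) (ι4 m c) := by
  rw [g1]; module

lemma g2_lt (m : ℕ) {a c : Fin (m+2)} (h : a < c) :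
    g2 m a c = (1:ℝ) • eV (m+4) (ι4 m a) + (1:ℝ) • eV (m+4) (ι4 m c) := by
  rw [g2, if_pos h]; module

lemma g2_gt (m : ℕ) {a c : Fin (m+2)} (h : ¬ a < c) :
    g2 m a c = (-1:ℝ) • eV (m+4) (ι4 m a) + (-1:ℝ) • eV (m+4) (ι4 m c) := by
  rw [g2, if_neg h]; module

lemma f4_true (m : ℕ) (a : Fin (m+2)) (b : Fin (m+1)) :
    f4 m ((a, b), true) = g1 m a (a.succAbove b) := rfl

lemma f4_false (m : ℕ) (a : Fin (m+2)) (b : Fin (m+1)) :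
    f4 m ((a, b), false) = g2 m a (a.succAbove b) := rfl

lemma f4_mem_roots (m : ℕ) (q) : f4 m q ∈ rootsD (m+4) := by
  obtain ⟨⟨a, b⟩, u⟩ := q
  have hne : ι4 m a ≠ ι4 m (a.succAbove b) :=
    (ι4_inj m).ne (Fin.succAbove_ne a b).symm
  rcases u with _ | _
  · rw [f4_false]
    by_cases hlt : a < a.succAbove b
    · rw [g2_lt m hlt]
      exact ⟨_, _, hne, 1, 1, Or.inl rfl, Or.inl rfl, rfl⟩
    · rw [g2_gt m hlt]
      exact ⟨_, _, hne, -1, -1, Or.inr rfl, Or.inr rfl, rfl⟩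
  · rw [f4_true, g1_eq]
    exact ⟨_, _, hne, 1, -1, Or.inl rfl, Or.inr rfl, rfl⟩

lemma f4_inj (m : ℕ) : Function.Injective (f4 m) := by
  rintro ⟨⟨a, b⟩, u⟩ ⟨⟨a', b'⟩, u'⟩ h
  have hac : a ≠ a.succAbove b := (Fin.succAbove_ne a b).symm
  have hac' : a' ≠ a'.succAbove b' := (Fin.succAbove_ne a' b').symm
  have hij : ι4 m a ≠ ι4 m (a.succAbove b) := (ι4_inj m).ne hac
  have hkl : ι4 m a' ≠ ι4 m (a'.succAbove b') := (ι4_inj m).ne hac'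
  have finish : a = a' → a.succAbove b = a'.succAbove b' → u = u' →
      (((a, b), u) : (Fin (m+2) × Fin (m+1)) × Bool) = ((a', b'), u') := by
    rintro rfl hsab rfl
    have : b = b' := Fin.succAbove_right_injective hsab
    rw [this]
  have cross_ne : ι4 m a = ι4 m (a'.succAbove b') → ι4 m (a.succAbove b) = ι4 m a' →
      ((a < a.succAbove b ∧ a' < a'.succAbove b') ∨
       (¬ a < a.succAbove b ∧ ¬ a' < a'.succAbove b')) → False := by
    intro e1 e3 hor
    have v1 : a = a'.succAbove b' := ι4_inj m e1
    have v2 : a.succAbove b = a' := ι4_inj m e3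
    have w1 : a.1 = (a'.succAbove b').1 := congrArg Fin.val v1
    have w2 : (a.succAbove b).1 = a'.1 := congrArg Fin.val v2
    rcases hor with ⟨hl, hl'⟩ | ⟨hl, hl'⟩
    · have x1 : a.1 < (a.succAbove b).1 := Fin.lt_def.mp hl
      have x2 : a'.1 < (a'.succAbove b').1 := Fin.lt_def.mp hl'
      omega
    · have x1 : ¬ a.1 < (a.succAbove b).1 := fun hc => hl (Fin.lt_def.mpr hc)
      have x2 : ¬ a'.1 < (a'.succAbove b').1 := fun hc => hl' (Fin.lt_def.mpr hc)
      have y1 : a.1 ≠ (a.succAbove b).1 := fun hc => hac (Fin.ext hc)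
      have y2 : a'.1 ≠ (a'.succAbove b').1 := fun hc => hac' (Fin.ext hc)
      omega
  rcases u with _ | _ <;> rcases u' with _ | _
  · -- false false
    rw [f4_false, f4_false] at h
    by_cases hlt : a < a.succAbove b <;> by_cases hlt' : a' < a'.succAbove b'
    · rw [g2_lt m hlt, g2_lt m hlt'] at h
      rcases pair_inj hij hkl (by norm_num) (by norm_num) (by norm_num) h with
        ⟨e1, _, e3, _⟩ | ⟨e1, _, e3, _⟩
      · exact finish (ι4_inj m e1) (ι4_inj m e3) rfl
      · exact absurd (cross_ne e1 e3 (Or.inl ⟨hlt, hlt'⟩)) (fun hc => hc)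
    · rw [g2_lt m hlt, g2_gt m hlt'] at h
      rcases pair_inj hij hkl (by norm_num) (by norm_num) (by norm_num) h with
        ⟨_, e2, _, _⟩ | ⟨_, e2, _, _⟩ <;> exact absurd e2 (by norm_num)
    · rw [g2_gt m hlt, g2_lt m hlt'] at h
      rcases pair_inj hij hkl (by norm_num) (by norm_num) (by norm_num) h with
        ⟨_, e2, _, _⟩ | ⟨_, e2, _, _⟩ <;> exact absurd e2 (by norm_num)
    · rw [g2_gt m hlt, g2_gt m hlt'] at h
      rcases pair_inj hij hkl (by norm_num) (by norm_num) (by norm_num) h with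
        ⟨e1, _, e3, _⟩ | ⟨e1, _, e3, _⟩
      · exact finish (ι4_inj m e1) (ι4_inj m e3) rfl
      · exact absurd (cross_ne e1 e3 (Or.inr ⟨hlt, hlt'⟩)) (fun hc => hc)
  · -- false true
    rw [f4_false, f4_true, g1_eq] at h
    by_cases hlt : a < a.succAbove b
    · rw [g2_lt m hlt] at h
      rcases pair_inj hij hkl (by norm_num) (by norm_num) (by norm_num) h with
        ⟨_, _, _, e4⟩ | ⟨_, e2, _, _⟩
      · exact absurd e4 (by norm_num)
      · exact absurd e2 (by norm_num)
    · rw [g2_gt m hlt] at h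
      rcases pair_inj hij hkl (by norm_num) (by norm_num) (by norm_num) h with
        ⟨_, e2, _, _⟩ | ⟨_, _, _, e4⟩
      · exact absurd e2 (by norm_num)
      · exact absurd e4 (by norm_num)
  · -- true false
    rw [f4_true, f4_false, g1_eq] at h
    by_cases hlt' : a' < a'.succAbove b'
    · rw [g2_lt m hlt'] at h
      rcases pair_inj hij hkl (by norm_num) (by norm_num) (by norm_num) h with
        ⟨_, _, _, e4⟩ | ⟨_, _, _, e4⟩ <;> exact absurd e4 (by norm_num)
    · rw [g2_gt m hlt'] at h
      rcases pair_inj hij hkl (by norm_num) (by norm_num) (by norm_num) h with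
        ⟨_, e2, _, _⟩ | ⟨_, e2, _, _⟩ <;> exact absurd e2 (by norm_num)
  · -- true true
    rw [f4_true, f4_true, g1_eq, g1_eq] at h
    rcases pair_inj hij hkl (by norm_num) (by norm_num) (by norm_num) h with
      ⟨e1, _, e3, _⟩ | ⟨_, e2, _, _⟩
    · exact finish (ι4_inj m e1) (ι4_inj m e3) rfl
    · exact absurd e2 (by norm_num)

lemma f4_mem_span (h1 : ∀ k, 2 ≤ k → k ≤ m + 2 → aa m k ∈ Pi') (h2 : bb m ∈ Pi')
    (q) : f4 m q ∈ Submodule.span ℝ Pi' := by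
  have hsingle := single_mem4 h1 h2
  obtain ⟨⟨a, b⟩, u⟩ := q
  have ha : eV (m+4) (ι4 m a) ∈ Submodule.span ℝ Pi' := by
    rw [eV_eq_ee]
    exact hsingle _ (by simp [ι4]) (by simp [ι4]; omega)
  have hc : eV (m+4) (ι4 m (a.succAbove b)) ∈ Submodule.span ℝ Pi' := by
    rw [eV_eq_ee]
    exact hsingle _ (by simp [ι4]) (by simp [ι4]; omega)
  rcases u with _ | _
  · rw [f4_false, g2]
    split_ifs
    · exact Submodule.add_mem _ ha hc
    · exact Submodule.sub_mem _ (Submodule.neg_mem _ ha) hc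
  · rw [f4_true, g1]
    exact Submodule.sub_mem _ ha hc

lemma case4 (h1 : ∀ k, 2 ≤ k → k ≤ m + 2 → aa m k ∈ Pi') (h2 : bb m ∈ Pi')
    (hm : 1 ≤ m) :
    (m+3)*(m+2) ≤ (rootsD (m+4) ∩ ↑(Submodule.span ℝ Pi')).ncard := by
  have hbound := card_le_ncard (f4 m) (f4_inj m)
    (fun q => Set.mem_inter (f4_mem_roots m q) (f4_mem_span h1 h2 q)) (interFinite m Pi')
  have hcardγ : Fintype.card ((Fin (m+2) × Fin (m+1)) × Bool) = (m+2)*(m+1)*2 := by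
    simp [Fintype.card_prod]
  rw [hcardγ] at hbound
  nlinarith [hbound, hm]

end Case4

/-- in type D_r (r > 3), for an indecomposable simple subsystem
Pi' ⊆ Π of cardinality r − 2, one has |Δ ∩ span(Pi')| ≥ (r−1)(r−2) and hence
|Δ \ span(Pi')| ≤ (r−1)(r+2). -/
theorem stmt_12 (r : ℕ) (hr : 3 < r)
    (Pi' : Set (EuclideanSpace ℝ (Fin r)))
    (hsub : Pi' ⊆ simpleD r) (hcard : Pi'.ncard = r - 2)
    (hind : Indecomposable Pi') :
    (r - 1) * (r - 2) ≤
      (rootsD r ∩ (Submodule.span ℝ Pi' : Set (EuclideanSpace ℝ (Fin r)))).ncard ∧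
    (rootsD r \ (Submodule.span ℝ Pi' : Set (EuclideanSpace ℝ (Fin r)))).ncard ≤
      (r - 1) * (r + 2) := by
  obtain ⟨m, rfl⟩ : ∃ m, r = m + 4 := ⟨r - 4, by omega⟩
  have e1 : m + 4 - 1 = m + 3 := by omega
  have e2 : m + 4 - 2 = m + 2 := by omega
  rw [e2] at hcard
  have hfirst : (m+3)*(m+2) ≤ (rootsD (m+4) ∩ ↑(Submodule.span ℝ Pi')).ncard := by
    rcases classify hsub hcard hind with h | h | ⟨h1, h2⟩ | ⟨h1, h2, h3⟩
    · exact case1 h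
    · exact case2 h
    · exact case3 h1 h2
    · exact case4 h1 h2 h3
  rw [e1, e2]
  refine ⟨hfirst, ?_⟩
  have hsum := Set.ncard_inter_add_ncard_diff_eq_ncard (rootsD (m+4))
    (↑(Submodule.span ℝ Pi')) (rootsD_finite _)
  have hub := rootsD_ncard_le m
  have key : 2*(m+4)*(m+3) = (m+3)*(m+2) + (m+3)*(m+4+2) := by ring
  obtain ⟨P, hP⟩ : ∃ P, (m+3)*(m+2) = P := ⟨_, rfl⟩
  obtain ⟨Q, hQ⟩ : ∃ Q, (m+3)*(m+4+2) = Q := ⟨_, rfl⟩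
  obtain ⟨R, hR⟩ : ∃ R, 2*(m+4)*(m+3) = R := ⟨_, rfl⟩
  rw [hP] at hfirst
  rw [hR] at hub
  rw [hP, hQ, hR] at key
  rw [hQ]
  omega

end
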